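/- Let (A, ≻, ≺, ·) be a postassociative algebra over a field k and write x * y := x≻y + x≺y + x·y. On the vector space Â := A × A define the bilinear product (a, b) ∗ (c, d) := (a*c, a≻d + b≺c + b·d). Then ∗ is an associative product on Â. -/
import Mathlib


/-- For a postassociative algebra `(A, ≻, ≺, ·)` with `x * y := x≻y + x≺y + x·y`, the
product `(a, b) ∗ (c, d) := (a*c, a≻d + b≺c + b·d)` on `Â := A × A` is associative. -/
theorem postassociative_hat_is_associative (k A : Type*) [Field k]
    [AddCommGroup A] [Module k A]
    (s p d : A →ₗ[k] A →ₗ[k] A)  -- s = ≻, p = ≺, d = ·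
    (h1 : ∀ x y z : A, p (p x y) z = p x (s y z + p y z + d y z))
    (h2 : ∀ x y z : A, p (s x y) z = s x (p y z))
    (h3 : ∀ x y z : A, s (s x y + p x y + d x y) z = s x (s y z))
    (h4 : ∀ x y z : A, s x (d y z) = d (s x y) z)
    (h5 : ∀ x y z : A, d (p x y) z = d x (s y z))
    (h6 : ∀ x y z : A, p (d x y) z = d x (p y z))
    (h7 : ∀ x y z : A, d (d x y) z = d x (d y z)) :
    ∀ M : A × A → A × A → A × A,
      (M = fun u v => (s u.1 v.1 + p u.1 v.1 + d u.1 v.1,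
                       s u.1 v.2 + p u.2 v.1 + d u.2 v.2)) →
      ∀ u v w : A × A, M (M u v) w = M u (M v w) := by
  intro M hM u v w
  subst hM
  obtain ⟨a, b⟩ := u
  obtain ⟨c, e⟩ := v
  obtain ⟨f, g⟩ := w
  refine Prod.ext ?_ ?_ <;>
  · simp only [map_add, LinearMap.add_apply, h1, h2, ← h3, h4, h5, h6, h7]
    abel
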